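/- Let F be a field of characteristic 2 and a, b, c, d ∈ F× with {a,b}₂ + {c,d}₂ = 0 in K₂(F)/2K₂(F). If {a,b}₂ ≠ 0, then the pure parts agree: ⟨a, b, ab⟩ ≅ ⟨c, d, cd⟩ as symmetric bilinear forms; in particular c = ax² + by² + abz² for some x, y, z ∈ F. -/

import Mathlib

set_option linter.unusedSectionVars false
set_option maxHeartbeats 1600000

namespace Milnor

variable (F : Type*) [Field F]

/-- Relations defining the Milnor K-group `K_n(F)`: multiplicativity in each
slot and the Steinberg relation. -/
def rels (n : ℕ) : AddSubgroup (FreeAbelianGroup (Fin n → Fˣ)) :=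
  AddSubgroup.closure
    ({ x | ∃ (i : Fin n) (u v w : Fin n → Fˣ),
        (∀ j, j ≠ i → u j = v j ∧ u j = w j) ∧ w i = u i * v i ∧
        x = FreeAbelianGroup.of w - FreeAbelianGroup.of u - FreeAbelianGroup.of v } ∪
     { x | ∃ (i j : Fin n) (u : Fin n → Fˣ), i ≠ j ∧ (u i : F) + (u j : F) = 1 ∧
        x = FreeAbelianGroup.of u })

/-- The Milnor K-group `K_n(F)`. -/
def K (n : ℕ) := FreeAbelianGroup (Fin n → Fˣ) ⧸ rels F n

instance (n : ℕ) : AddCommGroup (K F n) :=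
  QuotientAddGroup.Quotient.addCommGroup _

/-- The subgroup `2^m K_n(F)` of `K_n(F)`. -/
def modSub (n m : ℕ) : AddSubgroup (K F n) :=
  AddSubgroup.closure { x | ∃ y : K F n, x = (2 ^ m) • y }

/-- The quotient `K_n(F)/2^m K_n(F)`. -/
def KMod (n m : ℕ) := K F n ⧸ modSub F n m

instance (n m : ℕ) : AddCommGroup (KMod F n m) :=
  QuotientAddGroup.Quotient.addCommGroup _

variable {F}

/-- The class of the symbol `{v 0, …, v (n-1)}` in `K_n(F)/2^m K_n(F)`. -/
def symbol {n : ℕ} (m : ℕ) (v : Fin n → Fˣ) : KMod F n m :=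
  QuotientAddGroup.mk (QuotientAddGroup.mk (FreeAbelianGroup.of v) : K F n)

open scoped Classical in
/-- `{a,b}` in `K₂(F)/2^m K₂(F)` for field elements, with junk value `0` if an
entry vanishes.  So `s2 1 a b` is `{a,b}₂` and `s2 2 a b` is `{a,b}₄`. -/
noncomputable def s2 (m : ℕ) (a b : F) : KMod F 2 m :=
  if h : a ≠ 0 ∧ b ≠ 0 then symbol m ![Units.mk0 a h.1, Units.mk0 b h.2] else 0

open scoped Classical in
/-- `{a,b,c,d}` in `K₄(F)/2^m K₄(F)` for field elements, junk value `0`. -/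
noncomputable def s4 (m : ℕ) (a b c d : F) : KMod F 4 m :=
  if h : a ≠ 0 ∧ b ≠ 0 ∧ c ≠ 0 ∧ d ≠ 0 then
    symbol m ![Units.mk0 a h.1, Units.mk0 b h.2.1, Units.mk0 c h.2.2.1, Units.mk0 d h.2.2.2]
  else 0

end Milnor

open Milnor

namespace Stmt7

variable {F : Type*} [Field F] [CharP F 2]

structure PDer (F : Type*) [Field F] : Type _ where
  S : Set F
  d : F → F
  add_mem : ∀ {x y : F}, x ∈ S → y ∈ S → x + y ∈ S
  mul_mem : ∀ {x y : F}, x ∈ S → y ∈ S → x * y ∈ S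
  inv_mem : ∀ {x : F}, x ∈ S → x⁻¹ ∈ S
  sq_mem : ∀ x : F, x ^ 2 ∈ S
  d_out : ∀ x ∉ S, d x = 0
  d_add : ∀ {x y : F}, x ∈ S → y ∈ S → d (x + y) = d x + d y
  d_mul : ∀ {x y : F}, x ∈ S → y ∈ S → d (x * y) = x * d y + y * d x
  d_sq : ∀ x : F, d (x ^ 2) = 0

namespace PDer

variable (p : PDer F)

theorem zero_mem : (0 : F) ∈ p.S := by simpa using p.sq_mem 0

theorem one_mem : (1 : F) ∈ p.S := by simpa using p.sq_mem 1

theorem d_zero : p.d 0 = 0 := by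
  have := p.d_add p.zero_mem p.zero_mem
  simpa using this

theorem d_one : p.d 1 = 0 := by
  have h := p.d_mul p.one_mem p.one_mem
  simp only [one_mul, mul_one] at h
  have : p.d 1 + p.d 1 = p.d 1 := by rw [← h]
  simpa using congrArg (fun t => t - p.d 1) this

instance : Preorder (PDer F) where
  le p q := p.S ⊆ q.S ∧ ∀ x ∈ p.S, q.d x = p.d x
  le_refl p := ⟨subset_rfl, fun _ _ => rfl⟩
  le_trans p q r hpq hqr :=
    ⟨hpq.1.trans hqr.1, fun x hx => (hqr.2 x (hpq.1 hx)).trans (hpq.2 x hx)⟩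

theorem le_def {p q : PDer F} : p ≤ q ↔ p.S ⊆ q.S ∧ ∀ x ∈ p.S, q.d x = p.d x := Iff.rfl

/-- One-step extension of a partial derivation with prescribed value at `t`. -/
theorem exists_step (p : PDer F) {t : F} (ht : t ∉ p.S) (lam : F) :
    ∃ q : PDer F, p ≤ q ∧
      q.S = {z : F | ∃ ef : F × F, ef.1 ∈ p.S ∧ ef.2 ∈ p.S ∧ z = ef.1 + ef.2 * t} ∧
      q.d t = lam ∧
      (∀ e f : F, e ∈ p.S → f ∈ p.S → q.d (e + f * t) = p.d e + t * p.d f + f * lam) := by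
  classical
  have h2 : (2 : F) = 0 := CharTwo.two_eq_zero
  set S' : Set F :=
    {z : F | ∃ ef : F × F, ef.1 ∈ p.S ∧ ef.2 ∈ p.S ∧ z = ef.1 + ef.2 * t} with hS'
  have uniq : ∀ e f e' f' : F, e ∈ p.S → f ∈ p.S → e' ∈ p.S → f' ∈ p.S →
      e + f * t = e' + f' * t → e = e' ∧ f = f' := by
    intro e f e' f' he hf he' hf' heq
    by_cases hff : f = f'
    · subst hff
      exact ⟨add_right_cancel heq, rfl⟩
    · exfalso
      have hsum : f + f' ≠ 0 := by
        intro h0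
        apply hff
        have : f = -f' := eq_neg_of_add_eq_zero_left h0
        rwa [CharTwo.neg_eq] at this
      have hteq : (f + f') * t = e + e' := by
        linear_combination heq + (f' * t - e) * h2
      have : t = (f + f')⁻¹ * (e + e') := by
        field_simp at hteq ⊢
        linear_combination hteq
      exact ht (this ▸ p.mul_mem (p.inv_mem (p.add_mem hf hf')) (p.add_mem he he'))
  set dfun : F → F := fun z =>
    if h : z ∈ S' then p.d h.choose.1 + t * p.d h.choose.2 + h.choose.2 * lam else 0
    with hdfun
  have dval : ∀ e f : F, e ∈ p.S → f ∈ p.S →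
      dfun (e + f * t) = p.d e + t * p.d f + f * lam := by
    intro e f he hf
    have hz : e + f * t ∈ S' := ⟨(e, f), he, hf, rfl⟩
    simp only [hdfun]
    rw [dif_pos hz]
    obtain ⟨he1, hf1, heq⟩ := hz.choose_spec
    obtain ⟨hee, hff⟩ := uniq _ _ _ _ he1 hf1 he hf heq.symm
    rw [hee, hff]
  refine ⟨⟨S', dfun, ?_, ?_, ?_, ?_, ?_, ?_, ?_, ?_⟩, ⟨?_, ?_⟩, rfl, ?_, fun e f he hf => dval e f he hf⟩
  · -- add_mem
    rintro x y ⟨⟨e, f⟩, he, hf, rfl⟩ ⟨⟨e', f'⟩, he', hf', rfl⟩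
    exact ⟨(e + e', f + f'), p.add_mem he he', p.add_mem hf hf', by ring⟩
  · -- mul_mem
    rintro x y ⟨⟨e, f⟩, he, hf, rfl⟩ ⟨⟨e', f'⟩, he', hf', rfl⟩
    exact ⟨(e * e' + f * f' * t ^ 2, e * f' + f * e'),
      p.add_mem (p.mul_mem he he') (p.mul_mem (p.mul_mem hf hf') (p.sq_mem t)),
      p.add_mem (p.mul_mem he hf') (p.mul_mem hf he'), by ring⟩
  · -- inv_mem
    rintro x ⟨⟨e, f⟩, he, hf, rfl⟩
    by_cases hz0 : e + f * t = 0
    · rw [hz0]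
      exact ⟨(0, 0), p.zero_mem, p.zero_mem, by simp⟩
    · have hinv : ((e + f * t) ^ 2)⁻¹ ∈ p.S := p.inv_mem (p.sq_mem _)
      refine ⟨(e * ((e + f * t) ^ 2)⁻¹, f * ((e + f * t) ^ 2)⁻¹),
        p.mul_mem he hinv, p.mul_mem hf hinv, ?_⟩
      field_simp
  · -- sq_mem
    intro x
    exact ⟨(x ^ 2, 0), p.sq_mem x, p.zero_mem, by ring⟩
  · -- d_out
    intro x hx
    simp only [hdfun]
    rw [dif_neg hx]
  · -- d_add
    rintro x y ⟨⟨e, f⟩, he, hf, rfl⟩ ⟨⟨e', f'⟩, he', hf', rfl⟩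
    rw [show e + f * t + (e' + f' * t) = (e + e') + (f + f') * t from by ring,
      dval _ _ (p.add_mem he he') (p.add_mem hf hf'), dval _ _ he hf, dval _ _ he' hf',
      p.d_add he he', p.d_add hf hf']
    ring
  · -- d_mul
    rintro x y ⟨⟨e, f⟩, he, hf, rfl⟩ ⟨⟨e', f'⟩, he', hf', rfl⟩
    rw [show (e + f * t) * (e' + f' * t) = (e * e' + f * f' * t ^ 2) + (e * f' + f * e') * t
        from by ring,
      dval _ _ (p.add_mem (p.mul_mem he he') (p.mul_mem (p.mul_mem hf hf') (p.sq_mem t)))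
        (p.add_mem (p.mul_mem he hf') (p.mul_mem hf he')),
      dval _ _ he hf, dval _ _ he' hf',
      p.d_add (p.mul_mem he he') (p.mul_mem (p.mul_mem hf hf') (p.sq_mem t)),
      p.d_mul he he', p.d_mul (p.mul_mem hf hf') (p.sq_mem t), p.d_mul hf hf', p.d_sq t,
      p.d_add (p.mul_mem he hf') (p.mul_mem hf he'), p.d_mul he hf', p.d_mul hf he']
    linear_combination (-(f * f' * lam * t)) * h2
  · -- d_sq
    intro x
    have := dval (x ^ 2) 0 (p.sq_mem x) p.zero_mem
    simp only [zero_mul, add_zero] at this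
    rw [this, p.d_sq, p.d_zero]
    ring
  · -- S ⊆ S'
    intro x hx
    exact ⟨(x, 0), hx, p.zero_mem, by ring⟩
  · -- d agrees
    intro x hx
    show dfun x = p.d x
    have := dval x 0 hx p.zero_mem
    simp only [zero_mul, add_zero] at this
    rw [this, p.d_zero]
    ring
  · -- value at t
    show dfun t = lam
    have := dval 0 1 p.zero_mem p.one_mem
    simp only [zero_add, one_mul] at this
    rw [this, p.d_zero, p.d_one]
    ring

/-- Every partial derivation extends to a derivation defined on all of `F`. -/
theorem exists_total (p₀ : PDer F) : ∃ q : PDer F, p₀ ≤ q ∧ q.S = Set.univ := by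
  classical
  have ih : ∀ c ⊆ Set.Ici p₀, IsChain (· ≤ ·) c → ∀ y ∈ c, ∃ ub : PDer F, ∀ z ∈ c, z ≤ ub := by
    intro c _ hchain y hy
    have agree : ∀ r r', r ∈ c → r' ∈ c → ∀ x : F, x ∈ r.S → x ∈ r'.S → r.d x = r'.d x := by
      intro r r' hr hr' x hxr hxr'
      rcases eq_or_ne r r' with rfl | hne
      · rfl
      rcases hchain hr hr' hne with h | h
      · exact (h.2 x hxr).symm
      · exact h.2 x hxr'
    have directed : ∀ r r', r ∈ c → r' ∈ c → ∃ s ∈ c, r.S ⊆ s.S ∧ r'.S ⊆ s.S := by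
      intro r r' hr hr'
      rcases eq_or_ne r r' with rfl | hne
      · exact ⟨r, hr, subset_rfl, subset_rfl⟩
      rcases hchain hr hr' hne with h | h
      · exact ⟨r', hr', h.1, subset_rfl⟩
      · exact ⟨r, hr, subset_rfl, h.1⟩
    set SU : Set F := ⋃ r ∈ c, r.S with hSU
    have memSU : ∀ x : F, x ∈ SU ↔ ∃ r, r ∈ c ∧ x ∈ PDer.S r := by
      intro x
      simp [hSU, Set.mem_iUnion]
    set D : F → F := fun x => if h : ∃ r, r ∈ c ∧ x ∈ PDer.S r then h.choose.d x else 0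
      with hD
    have dv : ∀ r, r ∈ c → ∀ x ∈ r.S, D x = r.d x := by
      intro r hr x hx
      have hex : ∃ r, r ∈ c ∧ x ∈ PDer.S r := ⟨r, hr, hx⟩
      simp only [hD]
      rw [dif_pos hex]
      exact agree _ _ hex.choose_spec.1 hr x hex.choose_spec.2 hx
    have common : ∀ x y : F, x ∈ SU → y ∈ SU → ∃ s, s ∈ c ∧ x ∈ PDer.S s ∧ y ∈ PDer.S s := by
      intro x y hx hy
      obtain ⟨r, hr, hxr⟩ := (memSU x).1 hx
      obtain ⟨r', hr', hyr⟩ := (memSU y).1 hy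
      obtain ⟨s, hs, h1, h2⟩ := directed r r' hr hr'
      exact ⟨s, hs, h1 hxr, h2 hyr⟩
    refine ⟨⟨SU, D, ?_, ?_, ?_, ?_, ?_, ?_, ?_, ?_⟩, ?_⟩
    · intro x y hx hy
      obtain ⟨s, hs, hxs, hys⟩ := common x y hx hy
      exact (memSU _).2 ⟨s, hs, s.add_mem hxs hys⟩
    · intro x y hx hy
      obtain ⟨s, hs, hxs, hys⟩ := common x y hx hy
      exact (memSU _).2 ⟨s, hs, s.mul_mem hxs hys⟩
    · intro x hx
      obtain ⟨r, hr, hxr⟩ := (memSU x).1 hx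
      exact (memSU _).2 ⟨r, hr, r.inv_mem hxr⟩
    · intro x
      exact (memSU _).2 ⟨y, hy, y.sq_mem x⟩
    · intro x hx
      simp only [hD]
      rw [dif_neg]
      intro hex
      exact hx ((memSU x).2 hex)
    · intro x y hx hy
      obtain ⟨s, hs, hxs, hys⟩ := common x y hx hy
      rw [dv s hs _ (s.add_mem hxs hys), dv s hs _ hxs, dv s hs _ hys, s.d_add hxs hys]
    · intro x y hx hy
      obtain ⟨s, hs, hxs, hys⟩ := common x y hx hy
      rw [dv s hs _ (s.mul_mem hxs hys), dv s hs _ hxs, dv s hs _ hys, s.d_mul hxs hys]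
    · intro x
      rw [dv y hy _ (y.sq_mem x), y.d_sq]
    · intro z hz
      refine ⟨fun x hx => (memSU x).2 ⟨z, hz, hx⟩, fun x hx => dv z hz x hx⟩
  obtain ⟨m, hm, hmax⟩ := zorn_le_nonempty_Ici₀ p₀ ih p₀ le_rfl
  refine ⟨m, hm, ?_⟩
  by_contra hne
  obtain ⟨t, ht⟩ : ∃ t : F, t ∉ m.S := by
    by_contra h
    push_neg at h
    exact hne (Set.eq_univ_of_forall h)
  obtain ⟨q, hq, hqS, -⟩ := m.exists_step ht 0
  have htq : t ∈ q.S := by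
    rw [hqS]
    exact ⟨(0, 1), m.zero_mem, m.one_mem, by ring⟩
  exact ht ((hmax hq).1 htq)



/-- The subfield of squares, with the zero derivation. -/
def sqDer (F : Type*) [Field F] [CharP F 2] : PDer F where
  S := {z : F | ∃ x : F, z = x ^ 2}
  d := fun _ => 0
  add_mem := by rintro x y ⟨u, rfl⟩ ⟨v, rfl⟩; exact ⟨u + v, (CharTwo.add_sq u v).symm⟩
  mul_mem := by rintro x y ⟨u, rfl⟩ ⟨v, rfl⟩; exact ⟨u * v, (mul_pow u v 2).symm⟩
  inv_mem := by rintro x ⟨u, rfl⟩; exact ⟨u⁻¹, by rw [inv_pow]⟩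
  sq_mem := fun x => ⟨x, rfl⟩
  d_out := fun _ _ => rfl
  d_add := fun _ _ => by simp
  d_mul := fun _ _ => by simp
  d_sq := fun _ => rfl

@[simp] theorem sqDer_d (x : F) : (sqDer F).d x = 0 := rfl

end PDer

/-- `1, a, b, ab` are linearly independent over the squares. -/
def Indep (a b : F) : Prop := ∀ x y z w : F,
  x ^ 2 + a * y ^ 2 + b * z ^ 2 + a * b * w ^ 2 = 0 → x = 0 ∧ y = 0 ∧ z = 0 ∧ w = 0

theorem main_derivs (a b : F) (hi : Indep a b) :
    ∃ (E : Set F) (Da Db : PDer F),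
      Da.S = Set.univ ∧ Db.S = Set.univ ∧
      Da.d a = 1 ∧ Da.d b = 0 ∧ Db.d a = 0 ∧ Db.d b = 1 ∧
      (∀ z : F, z ∈ E ↔ ∃ x y u v : F, z = x ^ 2 + a * y ^ 2 + b * u ^ 2 + a * b * v ^ 2) ∧
      (∀ t ∉ E, ∃ Dt : PDer F, Dt.S = Set.univ ∧ (∀ z ∈ E, Dt.d z = 0) ∧ Dt.d t = 1) := by
  classical
  have h2 : (2 : F) = 0 := CharTwo.two_eq_zero
  set p0 := PDer.sqDer F with hp0
  have ha0 : a ∉ p0.S := by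
    rintro ⟨x, rfl⟩
    have := (hi x 1 0 0 (by push_cast; linear_combination x ^ 2 * h2)).2.1
    exact one_ne_zero this
  set S1 : Set F := {z : F | ∃ ef : F × F, ef.1 ∈ p0.S ∧ ef.2 ∈ p0.S ∧ z = ef.1 + ef.2 * a}
    with hS1def
  have hbS1 : b ∉ S1 := by
    rintro ⟨⟨e, f⟩, ⟨x, rfl⟩, ⟨y, rfl⟩, heq⟩
    have := (hi x y 1 0 (by linear_combination heq + (x ^ 2 + a * y ^ 2) * h2)).2.2.1
    exact one_ne_zero this
  have haS1 : a ∈ S1 := ⟨(0, 1), p0.zero_mem, p0.one_mem, by ring⟩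
  -- the canonical subfield E with the zero derivation
  obtain ⟨p1, hle1, hS1', hd1a, hdval1⟩ := p0.exists_step ha0 0
  rw [← hS1def] at hS1'
  have hd1zero : ∀ z ∈ p1.S, p1.d z = 0 := by
    intro z hz
    rw [hS1'] at hz
    obtain ⟨⟨e, f⟩, he, hf, rfl⟩ := hz
    rw [hdval1 e f he hf]
    simp [hp0]
  obtain ⟨p2, hle2, hS2, hd2b, hdval2⟩ := p1.exists_step (hS1' ▸ hbS1) 0
  have memE : ∀ z : F, z ∈ p2.S ↔
      ∃ x y u v : F, z = x ^ 2 + a * y ^ 2 + b * u ^ 2 + a * b * v ^ 2 := by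
    intro z
    constructor
    · intro hz
      rw [hS2] at hz
      obtain ⟨⟨e, f⟩, he, hf, rfl⟩ := hz
      rw [hS1'] at he hf
      obtain ⟨⟨e1, f1⟩, ⟨x, rfl⟩, ⟨y, rfl⟩, rfl⟩ := he
      obtain ⟨⟨e2, f2⟩, ⟨u, rfl⟩, ⟨v, rfl⟩, rfl⟩ := hf
      exact ⟨x, y, u, v, by ring⟩
    · rintro ⟨x, y, u, v, rfl⟩
      rw [hS2]
      refine ⟨(x ^ 2 + y ^ 2 * a, u ^ 2 + v ^ 2 * a), ?_, ?_, by ring⟩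
      · rw [hS1']; exact ⟨(x ^ 2, y ^ 2), ⟨x, rfl⟩, ⟨y, rfl⟩, rfl⟩
      · rw [hS1']; exact ⟨(u ^ 2, v ^ 2), ⟨u, rfl⟩, ⟨v, rfl⟩, rfl⟩
  have hd2zero : ∀ z ∈ p2.S, p2.d z = 0 := by
    intro z hz
    rw [hS2] at hz
    obtain ⟨⟨e, f⟩, he, hf, rfl⟩ := hz
    rw [hdval2 e f he hf, hd1zero e he, hd1zero f hf]
    ring
  -- Da with values (1,0)
  obtain ⟨q1, hleq1, hq1S, hq1a, hqdval1⟩ := p0.exists_step ha0 1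
  rw [← hS1def] at hq1S
  obtain ⟨q2, hleq2, hq2S, hq2b, hqdval2⟩ := q1.exists_step (hq1S ▸ hbS1) 0
  obtain ⟨Da, hleDa, hDaS⟩ := q2.exists_total
  have haq1 : a ∈ q1.S := hq1S ▸ haS1
  have hDa_a : Da.d a = 1 := by
    rw [hleDa.2 a (hleq2.1 haq1), hleq2.2 a haq1, hq1a]
  have hbq2 : b ∈ q2.S := by
    rw [hq2S]; exact ⟨(0, 1), q1.zero_mem, q1.one_mem, by ring⟩
  have hDa_b : Da.d b = 0 := by
    rw [hleDa.2 b hbq2, hq2b]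
  -- Db with values (0,1)
  obtain ⟨r2, hler2, hr2S, hr2b, hrdval2⟩ := p1.exists_step (hS1' ▸ hbS1) 1
  obtain ⟨Db, hleDb, hDbS⟩ := r2.exists_total
  have haP1 : a ∈ p1.S := hS1' ▸ haS1
  have hDb_a : Db.d a = 0 := by
    rw [hleDb.2 a (hler2.1 haP1), hler2.2 a haP1, hd1zero a haP1]
  have hbr2 : b ∈ r2.S := by
    rw [hr2S]; exact ⟨(0, 1), p1.zero_mem, p1.one_mem, by ring⟩
  have hDb_b : Db.d b = 1 := by
    rw [hleDb.2 b hbr2, hr2b]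
  refine ⟨p2.S, Da, Db, hDaS, hDbS, hDa_a, hDa_b, hDb_a, hDb_b, memE, ?_⟩
  -- derivations vanishing on E
  intro t ht
  obtain ⟨p3, hle3, hS3, hd3t, -⟩ := p2.exists_step ht 1
  obtain ⟨Dt, hleDt, hDtS⟩ := p3.exists_total
  refine ⟨Dt, hDtS, ?_, ?_⟩
  · intro z hz
    rw [hleDt.2 z (hle3.1 hz), hle3.2 z hz]
    exact hd2zero z hz
  · have htp3 : t ∈ p3.S := by
      rw [hS3]; exact ⟨(0, 1), p2.zero_mem, p2.one_mem, by ring⟩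
    rw [hleDt.2 t htp3, hd3t]

/-- The 2-form `dlog ∧ dlog` evaluated on a pair of derivations, on the free group. -/
noncomputable def phi0 (D D' : PDer F) : FreeAbelianGroup (Fin 2 → Fˣ) →+ F :=
  FreeAbelianGroup.lift fun v : Fin 2 → Fˣ =>
    (D.d (v 0) * D'.d (v 1) + D'.d (v 0) * D.d (v 1)) / ((v 0 : F) * (v 1 : F))

theorem phi0_of (D D' : PDer F) (v : Fin 2 → Fˣ) :
    phi0 D D' (FreeAbelianGroup.of v) =
      (D.d (v 0) * D'.d (v 1) + D'.d (v 0) * D.d (v 1)) / ((v 0 : F) * (v 1 : F)) :=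
  FreeAbelianGroup.lift_apply_of _ _

theorem rels_le_ker (D D' : PDer F) (hD : D.S = Set.univ) (hD' : D'.S = Set.univ) :
    rels F 2 ≤ (phi0 D D').ker := by
  have memD : ∀ x : F, x ∈ D.S := by rw [hD]; exact fun _ => trivial
  have memD' : ∀ x : F, x ∈ D'.S := by rw [hD']; exact fun _ => trivial
  have h2 : (2 : F) = 0 := CharTwo.two_eq_zero
  rw [rels, AddSubgroup.closure_le]
  rintro x (⟨i, u, v, w, hj, hw, rfl⟩ | ⟨i, j, u, hij, huv, rfl⟩)
  · simp only [SetLike.mem_coe, AddMonoidHom.mem_ker, map_sub, phi0_of]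
    fin_cases i
    · have hw' : w 0 = u 0 * v 0 := hw
      obtain ⟨h1, h2'⟩ := hj 1 (by decide)
      have hu0 : (u 0 : F) ≠ 0 := Units.ne_zero _
      have hv0 : (v 0 : F) ≠ 0 := Units.ne_zero _
      have hu1 : (u 1 : F) ≠ 0 := Units.ne_zero _
      rw [hw', ← h1, ← h2', Units.val_mul,
        D.d_mul (memD _) (memD _), D'.d_mul (memD' _) (memD' _)]
      field_simp
      ring
    · have hw' : w 1 = u 1 * v 1 := hw
      obtain ⟨h1, h2'⟩ := hj 0 (by decide)
      have hu0 : (u 1 : F) ≠ 0 := Units.ne_zero _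
      have hv0 : (v 1 : F) ≠ 0 := Units.ne_zero _
      have hu1 : (u 0 : F) ≠ 0 := Units.ne_zero _
      rw [hw', ← h1, ← h2', Units.val_mul,
        D.d_mul (memD _) (memD _), D'.d_mul (memD' _) (memD' _)]
      field_simp
      ring
  · simp only [SetLike.mem_coe, AddMonoidHom.mem_ker, phi0_of]
    have key : ∀ s t : Fˣ, (s : F) + (t : F) = 1 →
        D.d (s : F) * D'.d (t : F) + D'.d (s : F) * D.d (t : F) = 0 := by
      intro s t hst
      have ht : (t : F) = 1 + (s : F) := by linear_combination hst - (s : F) * h2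
      have hdt : D.d (t : F) = D.d (s : F) := by
        rw [ht, D.d_add D.one_mem (memD _), D.d_one, zero_add]
      have hdt' : D'.d (t : F) = D'.d (s : F) := by
        rw [ht, D'.d_add D'.one_mem (memD' _), D'.d_one, zero_add]
      rw [hdt, hdt']
      linear_combination (D.d (s : F) * D'.d (s : F)) * h2
    fin_cases i <;> fin_cases j
    · simp at hij
    · have huv' : (u 0 : F) + (u 1 : F) = 1 := huv
      rw [key _ _ huv', zero_div]
    · have huv' : (u 1 : F) + (u 0 : F) = 1 := huv
      have hk := key _ _ huv'
      rw [div_eq_zero_iff]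
      left
      linear_combination hk
    · simp at hij


/-- The pairing descends to `K₂(F)/2K₂(F)`. -/
noncomputable def phi (D D' : PDer F) (hD : D.S = Set.univ) (hD' : D'.S = Set.univ) :
    KMod F 2 1 →+ F :=
  QuotientAddGroup.lift (modSub F 2 1)
    (QuotientAddGroup.lift (rels F 2) (phi0 D D') (rels_le_ker D D' hD hD'))
    (by
      rw [modSub, AddSubgroup.closure_le]
      rintro x ⟨y, rfl⟩
      rw [SetLike.mem_coe]
      change QuotientAddGroup.lift (rels F 2) (phi0 D D') (rels_le_ker D D' hD hD')
        (2 ^ 1 • (y : FreeAbelianGroup (Fin 2 → Fˣ) ⧸ rels F 2)) = 0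
      refine (map_nsmul (QuotientAddGroup.lift (rels F 2) (phi0 D D') (rels_le_ker D D' hD hD'))
        (2 ^ 1) y).trans ?_
      rw [pow_one, two_nsmul]
      exact CharTwo.add_self_eq_zero _)

theorem phi_s2 (D D' : PDer F) (hD : D.S = Set.univ) (hD' : D'.S = Set.univ)
    {a b : F} (ha : a ≠ 0) (hb : b ≠ 0) :
    phi D D' hD hD' (s2 1 a b) = (D.d a * D'.d b + D'.d a * D.d b) / (a * b) := by
  rw [s2, dif_pos ⟨ha, hb⟩]
  have : phi D D' hD hD' (symbol 1 ![Units.mk0 a ha, Units.mk0 b hb]) =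
      phi0 D D' (FreeAbelianGroup.of ![Units.mk0 a ha, Units.mk0 b hb]) := rfl
  rw [this, phi0_of]
  simp

/-- Everything in `K₂/2` is 2-torsion. -/
theorem kmod_two_torsion (x : KMod F 2 1) : x + x = 0 := by
  induction x using QuotientAddGroup.induction_on with
  | H y =>
    change (QuotientAddGroup.mk (y + y) : KMod F 2 1) = 0
    rw [QuotientAddGroup.eq_zero_iff]
    exact AddSubgroup.subset_closure ⟨y, by rw [pow_one, two_smul]⟩

theorem kmod_neg (x : KMod F 2 1) : -x = x := by
  rw [neg_eq_iff_add_eq_zero]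
  exact kmod_two_torsion x

theorem symbol_mul_left (u u' v : Fˣ) :
    (symbol 1 ![u * u', v] : KMod F 2 1) = symbol 1 ![u, v] + symbol 1 ![u', v] := by
  have hA : FreeAbelianGroup.of ![u * u', v] - FreeAbelianGroup.of ![u, v]
      - FreeAbelianGroup.of ![u', v] ∈ rels F 2 := by
    apply AddSubgroup.subset_closure
    left
    refine ⟨0, ![u, v], ![u', v], ![u * u', v], ?_, by simp, rfl⟩
    intro j hj
    fin_cases j
    · exact absurd rfl hj
    · exact ⟨rfl, rfl⟩
  have h0 : (QuotientAddGroup.mk (QuotientAddGroup.mk (FreeAbelianGroup.of ![u * u', v]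
      - FreeAbelianGroup.of ![u, v] - FreeAbelianGroup.of ![u', v]) : K F 2) : KMod F 2 1) = 0 := by
    rw [(QuotientAddGroup.eq_zero_iff _).2 hA]
    rfl
  rw [QuotientAddGroup.mk_sub, QuotientAddGroup.mk_sub] at h0
  erw [QuotientAddGroup.mk_sub, QuotientAddGroup.mk_sub] at h0
  have := sub_eq_zero.mp (by rwa [sub_sub] at h0)
  exact this

theorem symbol_mul_right (u v v' : Fˣ) :
    (symbol 1 ![u, v * v'] : KMod F 2 1) = symbol 1 ![u, v] + symbol 1 ![u, v'] := by
  have hA : FreeAbelianGroup.of ![u, v * v'] - FreeAbelianGroup.of ![u, v]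
      - FreeAbelianGroup.of ![u, v'] ∈ rels F 2 := by
    apply AddSubgroup.subset_closure
    left
    refine ⟨1, ![u, v], ![u, v'], ![u, v * v'], ?_, by simp, rfl⟩
    intro j hj
    fin_cases j
    · exact ⟨rfl, rfl⟩
    · exact absurd rfl hj
  have h0 : (QuotientAddGroup.mk (QuotientAddGroup.mk (FreeAbelianGroup.of ![u, v * v']
      - FreeAbelianGroup.of ![u, v] - FreeAbelianGroup.of ![u, v']) : K F 2) : KMod F 2 1) = 0 := by
    rw [(QuotientAddGroup.eq_zero_iff _).2 hA]
    rfl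
  rw [QuotientAddGroup.mk_sub, QuotientAddGroup.mk_sub] at h0
  erw [QuotientAddGroup.mk_sub, QuotientAddGroup.mk_sub] at h0
  exact sub_eq_zero.mp (by rwa [sub_sub] at h0)

theorem symbol_steinberg (u v : Fˣ) (h : (u : F) + (v : F) = 1) :
    (symbol 1 ![u, v] : KMod F 2 1) = 0 := by
  have hA : FreeAbelianGroup.of ![u, v] ∈ rels F 2 := by
    apply AddSubgroup.subset_closure
    right
    exact ⟨0, 1, ![u, v], by decide, by simpa using h, rfl⟩
  rw [symbol, (QuotientAddGroup.eq_zero_iff _).2 hA]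
  rfl

theorem s2_mul_left {a a' b : F} (ha : a ≠ 0) (ha' : a' ≠ 0) (hb : b ≠ 0) :
    s2 1 (a * a') b = s2 1 a b + s2 1 a' b := by
  rw [s2, s2, s2, dif_pos ⟨mul_ne_zero ha ha', hb⟩, dif_pos ⟨ha, hb⟩, dif_pos ⟨ha', hb⟩]
  have : Units.mk0 (a * a') (mul_ne_zero ha ha') = Units.mk0 a ha * Units.mk0 a' ha' :=
    Units.ext (by simp)
  rw [this]
  exact symbol_mul_left _ _ _

theorem s2_mul_right {a b b' : F} (ha : a ≠ 0) (hb : b ≠ 0) (hb' : b' ≠ 0) :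
    s2 1 a (b * b') = s2 1 a b + s2 1 a b' := by
  rw [s2, s2, s2, dif_pos ⟨ha, mul_ne_zero hb hb'⟩, dif_pos ⟨ha, hb⟩, dif_pos ⟨ha, hb'⟩]
  have : Units.mk0 (b * b') (mul_ne_zero hb hb') = Units.mk0 b hb * Units.mk0 b' hb' :=
    Units.ext (by simp)
  rw [this]
  exact symbol_mul_right _ _ _

theorem s2_steinberg {a b : F} (ha : a ≠ 0) (hb : b ≠ 0) (h : a + b = 1) :
    s2 1 a b = 0 := by
  rw [s2, dif_pos ⟨ha, hb⟩]
  exact symbol_steinberg _ _ (by simpa using h)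

theorem s2_one_left {b : F} (hb : b ≠ 0) : s2 1 (1 : F) b = 0 := by
  have h := s2_mul_left (one_ne_zero (α := F)) (one_ne_zero (α := F)) hb
  rw [mul_one] at h
  exact left_eq_add.mp h

theorem s2_sq_left {x b : F} (hx : x ≠ 0) (hb : b ≠ 0) : s2 1 (x ^ 2) b = 0 := by
  have h := s2_mul_left hx hx hb
  rw [← sq] at h
  rw [h]
  exact kmod_two_torsion _

theorem s2_sq_right {a x : F} (ha : a ≠ 0) (hx : x ≠ 0) : s2 1 a (x ^ 2) = 0 := by
  have h := s2_mul_right ha hx hx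
  rw [← sq] at h
  rw [h]
  exact kmod_two_torsion _

theorem s2_inv_left {a b : F} (ha : a ≠ 0) (hb : b ≠ 0) : s2 1 a⁻¹ b = s2 1 a b := by
  have h := s2_mul_left ha (inv_ne_zero ha) hb
  rw [mul_inv_cancel₀ ha, s2_one_left hb] at h
  have h' : s2 1 a b + s2 1 a⁻¹ b = 0 := h.symm
  exact (eq_neg_of_add_eq_zero_right h').trans (kmod_neg _)

theorem s2_inv_right {a b : F} (ha : a ≠ 0) (hb : b ≠ 0) : s2 1 a b⁻¹ = s2 1 a b := by
  have h := s2_mul_right ha hb (inv_ne_zero hb)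
  have hone : s2 1 a (1 : F) = 0 := by
    have h' := s2_mul_right ha (one_ne_zero (α := F)) (one_ne_zero (α := F))
    rw [mul_one] at h'
    exact left_eq_add.mp h'
  rw [mul_inv_cancel₀ hb, hone] at h
  have h' : s2 1 a b + s2 1 a b⁻¹ = 0 := h.symm
  exact (eq_neg_of_add_eq_zero_right h').trans (kmod_neg _)

theorem s2_self {a : F} (ha : a ≠ 0) : s2 1 a a = 0 := by
  have h2 : (2 : F) = 0 := CharTwo.two_eq_zero
  by_cases h1 : a = 1
  · subst h1
    exact s2_one_left one_ne_zero
  have h1a : (1 : F) + a ≠ 0 := by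
    intro h
    apply h1
    have : a = -1 := eq_neg_of_add_eq_zero_right h
    rwa [CharTwo.neg_eq] at this
  have hainv : a⁻¹ ≠ 1 := by
    intro h
    apply h1
    have := congrArg (·⁻¹) h
    simpa using this
  have h1ainv : (1 : F) + a⁻¹ ≠ 0 := by
    intro h
    apply hainv
    have : a⁻¹ = -1 := eq_neg_of_add_eq_zero_right h
    rwa [CharTwo.neg_eq] at this
  have hid : a = (1 + a) * (1 + a⁻¹)⁻¹ := by
    rw [eq_comm, mul_inv_eq_iff_eq_mul₀ h1ainv]
    field_simp
    ring
  have step1 : s2 1 a ((1 + a) * (1 + a⁻¹)⁻¹) = s2 1 a (1 + a) + s2 1 a (1 + a⁻¹)⁻¹ :=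
    s2_mul_right ha h1a (inv_ne_zero h1ainv)
  have hst1 : s2 1 a (1 + a) = 0 :=
    s2_steinberg ha h1a (by linear_combination a * h2)
  have hst2 : s2 1 a (1 + a⁻¹) = 0 := by
    rw [← s2_inv_left ha h1ainv]
    exact s2_steinberg (inv_ne_zero ha) h1ainv (by
      field_simp
      linear_combination h2)
  rw [← hid] at step1
  rw [step1, hst1, s2_inv_right ha h1ainv, hst2]
  simp

/-- `{a, u² + a v²} = 0` whenever `b = u² + a v²` is a norm from the quadratic extension. -/
theorem s2_norm {a b u v : F} (ha : a ≠ 0) (hb : b ≠ 0) (huv : b = u ^ 2 + a * v ^ 2) :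
    s2 1 a b = 0 := by
  have h2 : (2 : F) = 0 := CharTwo.two_eq_zero
  by_cases hv : v = 0
  · have hu : u ≠ 0 := by
      intro h
      rw [h, hv] at huv
      simp at huv
      exact hb huv
    rw [huv, hv]
    simpa using s2_sq_right ha hu
  by_cases hu : u = 0
  · rw [huv, hu]
    have hv2 : v ^ 2 ≠ 0 := pow_ne_zero _ hv
    have : (0:F) ^ 2 + a * v ^ 2 = a * v ^ 2 := by ring
    rw [this, s2_mul_right ha ha hv2, s2_self ha, s2_sq_right ha hv]
    simp
  -- both nonzero
  have ht : u / v ≠ 0 := div_ne_zero hu hv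
  set t := u / v with htdef
  have ht2 : t ^ 2 ≠ 0 := pow_ne_zero _ ht
  have hv2 : v ^ 2 ≠ 0 := pow_ne_zero _ hv
  have hb2 : b = v ^ 2 * (t ^ 2 + a) := by
    rw [htdef]
    field_simp
    linear_combination huv
  have hta : t ^ 2 + a ≠ 0 := by
    intro h
    rw [h, mul_zero] at hb2
    exact hb hb2
  have hbeta : (t ^ 2 + a) / t ^ 2 ≠ 0 := div_ne_zero hta ht2
  have hst : s2 1 (a / t ^ 2) ((t ^ 2 + a) / t ^ 2) = 0 := by
    apply s2_steinberg (div_ne_zero ha ht2) hbeta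
    field_simp
    linear_combination a * h2

  rw [div_eq_mul_inv a, s2_mul_left ha (inv_ne_zero ht2) hbeta,
    s2_inv_left ht2 hbeta, s2_sq_left ht hbeta] at hst
  have hkey : s2 1 a ((t ^ 2 + a) / t ^ 2) = 0 := by simpa using hst
  have hexp : s2 1 a (t ^ 2 + a) = 0 := by
    have : t ^ 2 + a = ((t ^ 2 + a) / t ^ 2) * t ^ 2 := by field_simp
    rw [this, s2_mul_right ha hbeta ht2, hkey, s2_sq_right ha ht]
    simp
  rw [hb2, s2_mul_right ha hv2 hta, s2_sq_right ha hv, hexp]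
  simp

/-- If the symbol `{a,b}` is nonzero then `1, a, b, ab` are `F²`-independent. -/
theorem indep_of_s2_ne {a b : F} (ha : a ≠ 0) (hb : b ≠ 0)
    (hs : s2 1 a b ≠ (0 : KMod F 2 1)) : Indep a b := by
  have h2 : (2 : F) = 0 := CharTwo.two_eq_zero
  intro x y z w hrel
  by_cases hs0 : z ^ 2 + a * w ^ 2 = 0
  · have hw : w = 0 := by
      by_contra hw
      have hw2 : w ^ 2 ≠ 0 := pow_ne_zero _ hw
      have haeq : a = (z / w) ^ 2 := by
        field_simp
        linear_combination hs0 - z ^ 2 * h2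
      have hzw : z / w ≠ 0 := by
        intro h
        rw [h] at haeq
        simp at haeq
        exact ha haeq
      exact hs (haeq ▸ s2_sq_left hzw hb)
    have hz : z = 0 := by
      rw [hw] at hs0
      have hzz : z ^ 2 = 0 := by linear_combination hs0
      exact sq_eq_zero_iff.mp hzz
    have hr0 : x ^ 2 + a * y ^ 2 = 0 := by
      rw [hz, hw] at hrel
      linear_combination hrel
    have hy : y = 0 := by
      by_contra hy
      have hy2 : y ^ 2 ≠ 0 := pow_ne_zero _ hy
      have haeq : a = (x / y) ^ 2 := by
        field_simp
        linear_combination hr0 - x ^ 2 * h2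
      have hxy : x / y ≠ 0 := by
        intro h
        rw [h] at haeq
        simp at haeq
        exact ha haeq
      exact hs (haeq ▸ s2_sq_left hxy hb)
    have hx : x = 0 := by
      rw [hy] at hr0
      have hxx : x ^ 2 = 0 := by linear_combination hr0
      exact sq_eq_zero_iff.mp hxx
    exact ⟨hx, hy, hz, hw⟩
  · exfalso
    have hrb : x ^ 2 + a * y ^ 2 = b * (z ^ 2 + a * w ^ 2) := by
      linear_combination hrel - (b * z ^ 2 + a * b * w ^ 2) * h2
    have huv : b = ((x * z + a * y * w) / (z ^ 2 + a * w ^ 2)) ^ 2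
        + a * ((x * w + y * z) / (z ^ 2 + a * w ^ 2)) ^ 2 := by
      field_simp
      linear_combination (z ^ 2 + a * w ^ 2) * hrb + (- 2 * a * x * y * z * w
        + 2 * a * b * z ^ 2 * w ^ 2 + b * z ^ 4 + a ^ 2 * b * w ^ 4 - a * z ^ 2 * y ^ 2
        - x ^ 2 * z ^ 2 - a * w ^ 2 * x ^ 2 - a ^ 2 * w ^ 2 * y ^ 2) * h2
    exact hs (s2_norm ha hb huv)



theorem PDer.d_coords (D : PDer F) (hD : D.S = Set.univ) (a b la lb x y z w : F)
    (hda : D.d a = la) (hdb : D.d b = lb) :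
    D.d (x ^ 2 + a * y ^ 2 + b * z ^ 2 + a * b * w ^ 2)
      = y ^ 2 * la + z ^ 2 * lb + w ^ 2 * (a * lb + b * la) := by
  have m : ∀ t : F, t ∈ D.S := fun t => by rw [hD]; trivial
  rw [D.d_add (m _) (m _), D.d_add (m _) (m _), D.d_add (m _) (m _),
    D.d_mul (m a) (m _), D.d_mul (m b) (m _), D.d_mul (m (a * b)) (m _), D.d_mul (m a) (m b)]
  simp only [D.d_sq]
  rw [hda, hdb]
  ring

end Stmt7

open Stmt7

/-- if `{a,b}₂ + {c,d}₂ = 0` and `{a,b}₂ ≠ 0`, then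
`⟨a,b,ab⟩ ≅ ⟨c,d,cd⟩`; in particular `c = ax² + by² + abz²`. -/
theorem stmt7 (F : Type*) [Field F] [CharP F 2] (a b c d : F)
    (ha : a ≠ 0) (hb : b ≠ 0) (hc : c ≠ 0) (hd : d ≠ 0)
    (hsum : s2 1 a b + s2 1 c d = (0 : KMod F 2 1))
    (hab : s2 1 a b ≠ (0 : KMod F 2 1)) :
    (∃ e : (Fin 3 → F) ≃ₗ[F] (Fin 3 → F), ∀ v w : Fin 3 → F,
      c * e v 0 * e w 0 + d * e v 1 * e w 1 + c * d * e v 2 * e w 2 =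
        a * v 0 * w 0 + b * v 1 * w 1 + a * b * v 2 * w 2) ∧
    ∃ x y z : F, c = a * x ^ 2 + b * y ^ 2 + a * b * z ^ 2 := by
  classical
  have h2 : (2 : F) = 0 := CharTwo.two_eq_zero
  have hi : Indep a b := indep_of_s2_ne ha hb hab
  obtain ⟨E, Da, Db, hDaS, hDbS, hDaa, hDab, hDba, hDbb, memE, hvanish⟩ := main_derivs a b hi
  have hab0 : a * b ≠ 0 := mul_ne_zero ha hb
  have hcd0 : c * d ≠ 0 := mul_ne_zero hc hd
  have star : ∀ D D' : PDer F, ∀ hD : D.S = Set.univ, ∀ hD' : D'.S = Set.univ,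
      (D.d a * D'.d b + D'.d a * D.d b) / (a * b)
        + (D.d c * D'.d d + D'.d c * D.d d) / (c * d) = 0 := by
    intro D D' hD hD'
    have h := congrArg (phi D D' hD hD') hsum
    rwa [map_add, map_zero, phi_s2 D D' hD hD' ha hb, phi_s2 D D' hD hD' hc hd] at h
  -- the determinant identity
  have hkey : a * b * (Da.d c * Db.d d + Db.d c * Da.d d) = c * d := by
    have h := star Da Db hDaS hDbS
    rw [hDaa, hDab, hDba, hDbb] at h
    field_simp at h
    linear_combination h - c * d * h2
  -- c and d lie in E
  have haE : a ∈ E := (memE a).2 ⟨0, 1, 0, 0, by ring⟩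
  have hbE : b ∈ E := (memE b).2 ⟨0, 0, 1, 0, by ring⟩
  have hcE : c ∈ E := by
    by_contra hcE
    obtain ⟨D, hDS, hDvan, hDc⟩ := hvanish c hcE
    have ea : Da.d d = Da.d c * D.d d := by
      have h := star D Da hDS hDaS
      rw [hDvan a haE, hDvan b hbE, hDc] at h
      simp only [zero_mul, mul_zero, add_zero, zero_add, zero_div, one_mul] at h
      have h0 := (div_eq_zero_iff.mp h).resolve_right hcd0
      linear_combination h0 - Da.d c * D.d d * h2
    have eb : Db.d d = Db.d c * D.d d := by
      have h := star D Db hDS hDbS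
      rw [hDvan a haE, hDvan b hbE, hDc] at h
      simp only [zero_mul, mul_zero, add_zero, zero_add, zero_div, one_mul] at h
      have h0 := (div_eq_zero_iff.mp h).resolve_right hcd0
      linear_combination h0 - Db.d c * D.d d * h2
    rw [ea, eb] at hkey
    exact hcd0 (by linear_combination -hkey + (a * b * Da.d c * Db.d c * D.d d) * h2)
  have hdE : d ∈ E := by
    by_contra hdE
    obtain ⟨D, hDS, hDvan, hDd⟩ := hvanish d hdE
    have ea : Da.d c = D.d c * Da.d d := by
      have h := star D Da hDS hDaS
      rw [hDvan a haE, hDvan b hbE, hDd] at h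
      simp only [zero_mul, mul_zero, add_zero, zero_add, zero_div, mul_one] at h
      have h0 := (div_eq_zero_iff.mp h).resolve_right hcd0
      linear_combination h0 - D.d c * Da.d d * h2
    have eb : Db.d c = D.d c * Db.d d := by
      have h := star D Db hDS hDbS
      rw [hDvan a haE, hDvan b hbE, hDd] at h
      simp only [zero_mul, mul_zero, add_zero, zero_add, zero_div, mul_one] at h
      have h0 := (div_eq_zero_iff.mp h).resolve_right hcd0
      linear_combination h0 - D.d c * Db.d d * h2
    rw [ea, eb] at hkey
    exact hcd0 (by linear_combination -hkey + (a * b * D.d c * Da.d d * Db.d d) * h2)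
  obtain ⟨p1, q1, r1, s1, hcc⟩ := (memE c).1 hcE
  obtain ⟨p2, q2, r2, s2, hdd⟩ := (memE d).1 hdE
  -- derivative values in coordinates
  have hDac : Da.d c = q1 ^ 2 * 1 + r1 ^ 2 * 0 + s1 ^ 2 * (a * 0 + b * 1) := by
    rw [hcc]; exact Da.d_coords hDaS a b 1 0 p1 q1 r1 s1 hDaa hDab
  have hDbc : Db.d c = q1 ^ 2 * 0 + r1 ^ 2 * 1 + s1 ^ 2 * (a * 1 + b * 0) := by
    rw [hcc]; exact Db.d_coords hDbS a b 0 1 p1 q1 r1 s1 hDba hDbb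
  have hDad : Da.d d = q2 ^ 2 * 1 + r2 ^ 2 * 0 + s2 ^ 2 * (a * 0 + b * 1) := by
    rw [hdd]; exact Da.d_coords hDaS a b 1 0 p2 q2 r2 s2 hDaa hDab
  have hDbd : Db.d d = q2 ^ 2 * 0 + r2 ^ 2 * 1 + s2 ^ 2 * (a * 1 + b * 0) := by
    rw [hdd]; exact Db.d_coords hDbS a b 0 1 p2 q2 r2 s2 hDba hDbb
  rw [hDac, hDbc, hDad, hDbd, hcc, hdd] at hkey
  -- the four-squares consequence
  have hSOS : (p1 * p2 + a * q1 * q2 + b * r1 * r2 + a * b * s1 * s2) ^ 2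
      + a * (p1 * q2 + p2 * q1) ^ 2 + b * (p1 * r2 + p2 * r1) ^ 2
      + a * b * (p1 * s2 + p2 * s1) ^ 2 = 0 := by
    linear_combination hkey + (a * a * b * q1 * q2 * s1 * s2 + a * a * q1 * q1 * q2 * q2
      + a * b * b * r1 * r2 * s1 * s2 + a * b * p1 * p1 * s2 * s2
      + 2 * a * b * p1 * p2 * s1 * s2 + a * b * p2 * p2 * s1 * s1
      + a * b * q1 * q2 * r1 * r2 + a * p1 * p1 * q2 * q2 + 2 * a * p1 * p2 * q1 * q2
      + a * p2 * p2 * q1 * q1 + b * b * r1 * r1 * r2 * r2 + b * p1 * p1 * r2 * r2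
      + 2 * b * p1 * p2 * r1 * r2 + b * p2 * p2 * r1 * r1 + p1 * p1 * p2 * p2) * h2
  obtain ⟨hS1, hS2, hS3, hS4⟩ := hi _ _ _ _ hSOS
  -- p1 = 0
  have hp1 : p1 = 0 := by
    by_contra hp1
    by_cases hp2 : p2 = 0
    · have hq2 : q2 = 0 := by
        rw [hp2] at hS2
        have hq : p1 * q2 = 0 := by linear_combination hS2
        simpa [hp1] using mul_eq_zero.mp hq
      have hr2 : r2 = 0 := by
        rw [hp2] at hS3
        have hq : p1 * r2 = 0 := by linear_combination hS3
        simpa [hp1] using mul_eq_zero.mp hq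
      have hs2 : s2 = 0 := by
        rw [hp2] at hS4
        have hq : p1 * s2 = 0 := by linear_combination hS4
        simpa [hp1] using mul_eq_zero.mp hq
      rw [hp2, hq2, hr2, hs2] at hdd
      exact hd (by rw [hdd]; ring)
    · have hquad : p2 * (p1 ^ 2 + a * q1 ^ 2 + b * r1 ^ 2 + a * b * s1 ^ 2) = 0 := by
        linear_combination p1 * hS1 - a * q1 * hS2 - b * r1 * hS3 - a * b * s1 * hS4
          + (a * p2 * q1 * q1 + b * p2 * r1 * r1 + a * b * p2 * s1 * s1) * h2
      have := (mul_eq_zero.mp hquad).resolve_left hp2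
      exact hp1 (hi p1 q1 r1 s1 this).1
  have hp2 : p2 = 0 := by
    by_contra hp2
    have hq1 : q1 = 0 := by
      rw [hp1] at hS2
      have hq : p2 * q1 = 0 := by linear_combination hS2
      simpa [hp2] using mul_eq_zero.mp hq
    have hr1 : r1 = 0 := by
      rw [hp1] at hS3
      have hq : p2 * r1 = 0 := by linear_combination hS3
      simpa [hp2] using mul_eq_zero.mp hq
    have hs1 : s1 = 0 := by
      rw [hp1] at hS4
      have hq : p2 * s1 = 0 := by linear_combination hS4
      simpa [hp2] using mul_eq_zero.mp hq
    rw [hp1, hq1, hr1, hs1] at hcc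
    exact hc (by rw [hcc]; ring)
  have hcp : c = a * q1 ^ 2 + b * r1 ^ 2 + a * b * s1 ^ 2 := by
    rw [hp1] at hcc; linear_combination hcc
  have hdp : d = a * q2 ^ 2 + b * r2 ^ 2 + a * b * s2 ^ 2 := by
    rw [hp2] at hdd; linear_combination hdd
  have horth : a * q1 * q2 + b * r1 * r2 + a * b * s1 * s2 = 0 := by
    rw [hp1, hp2] at hS1; linear_combination hS1
  -- the explicit isometry
  set m0 : F := r1 * s2 + s1 * r2 with hm0
  set m1 : F := q1 * s2 + s1 * q2 with hm1
  set m2 : F := q1 * r2 + r1 * q2 with hm2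
  have hex : ∃ L : (Fin 3 → F) →ₗ[F] (Fin 3 → F), ∀ v : Fin 3 → F,
      L v = ![q1 * v 0 + q2 * v 1 + b * m0 * v 2,
        r1 * v 0 + r2 * v 1 + a * m1 * v 2,
        s1 * v 0 + s2 * v 1 + m2 * v 2] := by
    refine ⟨⟨⟨fun v => ![q1 * v 0 + q2 * v 1 + b * m0 * v 2,
        r1 * v 0 + r2 * v 1 + a * m1 * v 2,
        s1 * v 0 + s2 * v 1 + m2 * v 2], ?_⟩, ?_⟩, fun v => rfl⟩
    · intro v w
      funext i
      fin_cases i <;> simp <;> ring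
    · intro t v
      funext i
      fin_cases i <;> simp <;> ring
  obtain ⟨L, hLdef⟩ := hex
  have hL0 : ∀ v : Fin 3 → F, L v 0 = q1 * v 0 + q2 * v 1 + b * m0 * v 2 := by
    intro v; rw [hLdef]; simp
  have hL1 : ∀ v : Fin 3 → F, L v 1 = r1 * v 0 + r2 * v 1 + a * m1 * v 2 := by
    intro v; rw [hLdef]; simp
  have hL2 : ∀ v : Fin 3 → F, L v 2 = s1 * v 0 + s2 * v 1 + m2 * v 2 := by
    intro v; rw [hLdef]; simp
  have g13 : a * q1 * (b * m0) + b * r1 * (a * m1) + a * b * s1 * m2 = 0 := by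
    rw [hm0, hm1, hm2]
    linear_combination (a * b * (q1 * r1 * s2 + q1 * s1 * r2 + r1 * s1 * q2)) * h2
  have g23 : a * q2 * (b * m0) + b * r2 * (a * m1) + a * b * s2 * m2 = 0 := by
    rw [hm0, hm1, hm2]
    linear_combination (a * b * (q1 * r2 * s2 + q2 * r1 * s2 + q2 * r2 * s1)) * h2
  have g33 : a * (b * m0) ^ 2 + b * (a * m1) ^ 2 + a * b * m2 ^ 2 = c * d := by
    rw [hm0, hm1, hm2, hcp, hdp]
    linear_combination (a * q1 * q2 + b * r1 * r2 + a * b * s1 * s2) * horth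
      + (-(a * a * b * b * s1 * s1 * s2 * s2) - a * a * q1 * q1 * q2 * q2
        - b * b * r1 * r1 * r2 * r2) * h2
  have hKey : ∀ v w : Fin 3 → F,
      a * L v 0 * L w 0 + b * L v 1 * L w 1 + a * b * L v 2 * L w 2
        = c * v 0 * w 0 + d * v 1 * w 1 + c * d * v 2 * w 2 := by
    intro v w
    rw [hL0, hL0, hL1, hL1, hL2, hL2]
    linear_combination (v 0 * w 0) * hcp.symm + (v 1 * w 1) * hdp.symm
      + (v 0 * w 1 + v 1 * w 0) * horth + (v 0 * w 2 + v 2 * w 0) * g13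
      + (v 1 * w 2 + v 2 * w 1) * g23 + (v 2 * w 2) * g33
  have hinj : Function.Injective L := by
    rw [injective_iff_map_eq_zero]
    intro v hv
    have hzero : ∀ w : Fin 3 → F,
        c * v 0 * w 0 + d * v 1 * w 1 + c * d * v 2 * w 2 = 0 := by
      intro w
      have h := (hKey v w).symm
      rw [hv] at h
      simpa using h
    have h0 : v 0 = 0 := by
      have h' := hzero ![1, 0, 0]
      simp at h'
      exact h'.resolve_left hc
    have h1 : v 1 = 0 := by
      have h' := hzero ![0, 1, 0]
      simp at h'
      exact h'.resolve_left hd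
    have h22 : v 2 = 0 := by
      have h' := hzero ![0, 0, 1]
      simp at h'
      exact h'.resolve_left (by rintro (h | h); exacts [hc h, hd h])
    funext i
    fin_cases i
    · exact h0
    · exact h1
    · exact h22
  have hsurj : Function.Surjective L := LinearMap.injective_iff_surjective.mp hinj
  set eL : (Fin 3 → F) ≃ₗ[F] (Fin 3 → F) := LinearEquiv.ofBijective L ⟨hinj, hsurj⟩ with heL
  refine ⟨⟨eL.symm, ?_⟩, q1, r1, s1, hcp⟩
  intro v w
  have hv : L (eL.symm v) = v := eL.apply_symm_apply v
  have hw : L (eL.symm w) = w := eL.apply_symm_apply w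
  have h := hKey (eL.symm v) (eL.symm w)
  rw [hv, hw] at h
  exact h.symm
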